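/- For every closed negation-free μL'f formula φ' and every product family P ⊆ 𝒫: if P ⊨'_F φ' then p ⊨_F fm(φ') for every product p ∈ P. -/
import Mathlib


namespace SPLmu

/-- A feature transition system: `theta s a t` is the feature expression
(identified with the set of products satisfying it) guarding the transition. -/
structure FTS (S A P : Type) where
  theta : S → A → S → Set P
  init : S

/-- A labeled transition system. -/
structure LTS (S A : Type) where
  trans : S → A → S → Prop
  init : S

/-- Projection of an FTS onto a product. -/
def FTS.proj {S A P : Type} (F : FTS S A P) (p : P) : LTS S A :=
  ⟨fun s a t => p ∈ F.theta s a t, F.init⟩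

/-- Knaster–Tarski least (pre)fixpoint. -/
def slfp {α : Type} (f : Set α → Set α) : Set α := ⋂₀ {V | f V ⊆ V}

/-- Knaster–Tarski greatest (post)fixpoint. -/
def sgfp {α : Type} (f : Set α → Set α) : Set α := ⋃₀ {V | V ⊆ f V}

/-- The modal mu-calculus μL. -/
inductive MuL (A X : Type) : Type where
  | bot | top
  | neg : MuL A X → MuL A X
  | or  : MuL A X → MuL A X → MuL A X
  | and : MuL A X → MuL A X → MuL A X
  | dia : A → MuL A X → MuL A X
  | box : A → MuL A X → MuL A X
  | var : X → MuL A X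
  | mu  : X → MuL A X → MuL A X
  | nu  : X → MuL A X → MuL A X

/-- The feature mu-calculus μLf (also used as the syntax of μL'f, whose
modality ⟪a|χ⟫ corresponds to `dia`; the translation `fm` is then the identity). -/
inductive MuLf (A X P : Type) : Type where
  | bot | top
  | neg : MuLf A X P → MuLf A X P
  | or  : MuLf A X P → MuLf A X P → MuLf A X P
  | and : MuLf A X P → MuLf A X P → MuLf A X P
  | dia : A → Set P → MuLf A X P → MuLf A X P
  | box : A → Set P → MuLf A X P → MuLf A X P
  | var : X → MuLf A X P
  | mu  : X → MuLf A X P → MuLf A X P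
  | nu  : X → MuLf A X P → MuLf A X P

variable {S A X P : Type}

/-- Standard μL semantics over an LTS. -/
def MuL.sem [DecidableEq X] (L : LTS S A) : MuL A X → (X → Set S) → Set S
  | .bot, _ => ∅
  | .top, _ => Set.univ
  | .neg φ, ε => (MuL.sem L φ ε)ᶜ
  | .or φ ψ, ε => MuL.sem L φ ε ∪ MuL.sem L ψ ε
  | .and φ ψ, ε => MuL.sem L φ ε ∩ MuL.sem L ψ ε
  | .dia a φ, ε => {s | ∃ t, L.trans s a t ∧ t ∈ MuL.sem L φ ε}
  | .box a φ, ε => {s | ∀ t, L.trans s a t → t ∈ MuL.sem L φ ε}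
  | .var x, ε => ε x
  | .mu x φ, ε => slfp (fun V => MuL.sem L φ (Function.update ε x V))
  | .nu x φ, ε => sgfp (fun V => MuL.sem L φ (Function.update ε x V))

/-- Product-based μLf semantics over an FTS (sets of state-product pairs). -/
def MuLf.sem [DecidableEq X] (F : FTS S A P) : MuLf A X P → (X → Set (S × P)) → Set (S × P)
  | .bot, _ => ∅
  | .top, _ => Set.univ
  | .neg φ, η => (MuLf.sem F φ η)ᶜ
  | .or φ ψ, η => MuLf.sem F φ η ∪ MuLf.sem F ψ η
  | .and φ ψ, η => MuLf.sem F φ η ∩ MuLf.sem F ψ η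
  | .dia a χ φ, η =>
      {sp | sp.2 ∈ χ ∧ ∃ t, sp.2 ∈ F.theta sp.1 a t ∧ (t, sp.2) ∈ MuLf.sem F φ η}
  | .box a χ φ, η =>
      {sp | sp.2 ∈ χ → ∀ t, sp.2 ∈ F.theta sp.1 a t → (t, sp.2) ∈ MuLf.sem F φ η}
  | .var x, η => η x
  | .mu x φ, η => slfp (fun V => MuLf.sem F φ (Function.update η x V))
  | .nu x φ, η => sgfp (fun V => MuLf.sem F φ (Function.update η x V))

/-- Family-based μL'f semantics over an FTS (sets of state-family pairs);
here `dia` plays the role of the family modality ⟪a|χ⟫. -/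
def MuLf.fsem [DecidableEq X] (F : FTS S A P) :
    MuLf A X P → (X → Set (S × Set P)) → Set (S × Set P)
  | .bot, _ => ∅
  | .top, _ => Set.univ
  | .neg φ, ζ => (MuLf.fsem F φ ζ)ᶜ
  | .or φ ψ, ζ => MuLf.fsem F φ ζ ∪ MuLf.fsem F ψ ζ
  | .and φ ψ, ζ => MuLf.fsem F φ ζ ∩ MuLf.fsem F ψ ζ
  | .dia a χ φ, ζ =>
      {sP | sP.2 ⊆ χ ∧ ∃ t, sP.2 ⊆ F.theta sP.1 a t ∧
        (t, sP.2 ∩ χ ∩ F.theta sP.1 a t) ∈ MuLf.fsem F φ ζ}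
  | .box a χ φ, ζ =>
      {sP | (sP.2 ∩ χ).Nonempty → ∀ t, (sP.2 ∩ χ ∩ F.theta sP.1 a t).Nonempty →
        (t, sP.2 ∩ χ ∩ F.theta sP.1 a t) ∈ MuLf.fsem F φ ζ}
  | .var x, ζ => ζ x
  | .mu x φ, ζ => slfp (fun W => MuLf.fsem F φ (Function.update ζ x W))
  | .nu x φ, ζ => sgfp (fun W => MuLf.fsem F φ (Function.update ζ x W))

-- The translation sm : μLf × 𝒫 → μL.
open Classical in
noncomputable def MuLf.sm : MuLf A X P → P → MuL A X
  | .bot, _ => .bot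
  | .top, _ => .top
  | .neg φ, p => .neg (MuLf.sm φ p)
  | .or φ ψ, p => .or (MuLf.sm φ p) (MuLf.sm ψ p)
  | .and φ ψ, p => .and (MuLf.sm φ p) (MuLf.sm ψ p)
  | .dia a χ φ, p => if p ∈ χ then .dia a (MuLf.sm φ p) else .bot
  | .box a χ φ, p => if p ∈ χ then .box a (MuLf.sm φ p) else .top
  | .var x, _ => .var x
  | .mu x φ, p => .mu x (MuLf.sm φ p)
  | .nu x φ, p => .nu x (MuLf.sm φ p)

/-- Free variables of a μLf formula. -/
def MuLf.fv : MuLf A X P → Set X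
  | .bot => ∅
  | .top => ∅
  | .neg φ => MuLf.fv φ
  | .or φ ψ => MuLf.fv φ ∪ MuLf.fv ψ
  | .and φ ψ => MuLf.fv φ ∪ MuLf.fv ψ
  | .dia _ _ φ => MuLf.fv φ
  | .box _ _ φ => MuLf.fv φ
  | .var x => {x}
  | .mu x φ => MuLf.fv φ \ {x}
  | .nu x φ => MuLf.fv φ \ {x}

/-- A μLf formula is closed if it has no free variables. -/
def MuLf.closed (φ : MuLf A X P) : Prop := MuLf.fv φ = ∅

/-- Negation-free μLf formulas. -/
def MuLf.negFree : MuLf A X P → Prop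
  | .bot => True
  | .top => True
  | .neg _ => False
  | .or φ ψ => MuLf.negFree φ ∧ MuLf.negFree ψ
  | .and φ ψ => MuLf.negFree φ ∧ MuLf.negFree ψ
  | .dia _ _ φ => MuLf.negFree φ
  | .box _ _ φ => MuLf.negFree φ
  | .var _ => True
  | .mu _ φ => MuLf.negFree φ
  | .nu _ φ => MuLf.negFree φ

/-- Diamond-free μLf formulas (no ⟨a|χ⟩ / ⟪a|χ⟫). -/
def MuLf.diaFree : MuLf A X P → Prop
  | .bot => True
  | .top => True
  | .neg φ => MuLf.diaFree φ
  | .or φ ψ => MuLf.diaFree φ ∧ MuLf.diaFree ψ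
  | .and φ ψ => MuLf.diaFree φ ∧ MuLf.diaFree ψ
  | .dia _ _ _ => False
  | .box _ _ φ => MuLf.diaFree φ
  | .var _ => True
  | .mu _ φ => MuLf.diaFree φ
  | .nu _ φ => MuLf.diaFree φ

mutual
/-- All free occurrences of `x` are under an even number of negations. -/
def MuLf.posIn (x : X) : MuLf A X P → Prop
  | .bot => True
  | .top => True
  | .neg φ => MuLf.negOcc x φ
  | .or φ ψ => MuLf.posIn x φ ∧ MuLf.posIn x ψ
  | .and φ ψ => MuLf.posIn x φ ∧ MuLf.posIn x ψ
  | .dia _ _ φ => MuLf.posIn x φ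
  | .box _ _ φ => MuLf.posIn x φ
  | .var _ => True
  | .mu y φ => y = x ∨ MuLf.posIn x φ
  | .nu y φ => y = x ∨ MuLf.posIn x φ

/-- All free occurrences of `x` are under an odd number of negations. -/
def MuLf.negOcc (x : X) : MuLf A X P → Prop
  | .bot => True
  | .top => True
  | .neg φ => MuLf.posIn x φ
  | .or φ ψ => MuLf.negOcc x φ ∧ MuLf.negOcc x ψ
  | .and φ ψ => MuLf.negOcc x φ ∧ MuLf.negOcc x ψ
  | .dia _ _ φ => MuLf.negOcc x φ
  | .box _ _ φ => MuLf.negOcc x φ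
  | .var y => y ≠ x
  | .mu y φ => y = x ∨ MuLf.negOcc x φ
  | .nu y φ => y = x ∨ MuLf.negOcc x φ
end

/-- Well-formedness: fixpoint-bound variables occur positively. -/
def MuLf.wf : MuLf A X P → Prop
  | .bot => True
  | .top => True
  | .neg φ => MuLf.wf φ
  | .or φ ψ => MuLf.wf φ ∧ MuLf.wf ψ
  | .and φ ψ => MuLf.wf φ ∧ MuLf.wf ψ
  | .dia _ _ φ => MuLf.wf φ
  | .box _ _ φ => MuLf.wf φ
  | .var _ => True
  | .mu x φ => MuLf.posIn x φ ∧ MuLf.wf φ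
  | .nu x φ => MuLf.posIn x φ ∧ MuLf.wf φ

/-- Substitution φ[¬X/X] of ¬X for the free occurrences of X. -/
def MuLf.substNegVar [DecidableEq X] (x : X) : MuLf A X P → MuLf A X P
  | .bot => .bot
  | .top => .top
  | .neg φ => .neg (MuLf.substNegVar x φ)
  | .or φ ψ => .or (MuLf.substNegVar x φ) (MuLf.substNegVar x ψ)
  | .and φ ψ => .and (MuLf.substNegVar x φ) (MuLf.substNegVar x ψ)
  | .dia a χ φ => .dia a χ (MuLf.substNegVar x φ)
  | .box a χ φ => .box a χ (MuLf.substNegVar x φ)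
  | .var y => if y = x then .neg (.var y) else .var y
  | .mu y φ => if y = x then .mu y φ else .mu y (MuLf.substNegVar x φ)
  | .nu y φ => if y = x then .nu y φ else .nu y (MuLf.substNegVar x φ)

/-- Projection from state-family sets to state-product sets. -/
def fp {S P : Type} (W : Set (S × Set P)) : Set (S × P) :=
  {sp | ∃ Pf : Set P, (sp.1, Pf) ∈ W ∧ sp.2 ∈ Pf}


lemma fp_mono {S P : Type} {W W' : Set (S × Set P)} (h : W ⊆ W') : fp W ⊆ fp W' := by
  rintro ⟨s, p⟩ ⟨Qf, hQf, hq⟩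
  exact ⟨Qf, h hQf, hq⟩

theorem key_lemma {S A X P : Type} [DecidableEq X] (F : FTS S A P) :
    ∀ (φ : MuLf A X P), MuLf.negFree φ →
      ∀ (ζ : X → Set (S × Set P)) (η : X → Set (S × P)),
        (∀ x, fp (ζ x) ⊆ η x) → fp (MuLf.fsem F φ ζ) ⊆ MuLf.sem F φ η := by
  intro φ
  induction φ with
  | bot =>
    intro _ ζ η _
    rintro ⟨s, p⟩ ⟨Qf, hQf, _⟩
    exact absurd hQf (Set.notMem_empty _)
  | top =>
    intro _ ζ η _ sp _
    simp [MuLf.sem]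
  | neg φ ih => intro hnf; exact absurd hnf id
  | or φ ψ ih1 ih2 =>
    intro hnf ζ η h
    rintro ⟨s, p⟩ ⟨Qf, hQf, hq⟩
    rcases hQf with hQf | hQf
    · exact Or.inl (ih1 hnf.1 ζ η h ⟨Qf, hQf, hq⟩)
    · exact Or.inr (ih2 hnf.2 ζ η h ⟨Qf, hQf, hq⟩)
  | and φ ψ ih1 ih2 =>
    intro hnf ζ η h
    rintro ⟨s, p⟩ ⟨Qf, hQf, hq⟩
    exact ⟨ih1 hnf.1 ζ η h ⟨Qf, hQf.1, hq⟩, ih2 hnf.2 ζ η h ⟨Qf, hQf.2, hq⟩⟩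
  | dia a χ φ ih =>
    intro hnf ζ η h
    rintro ⟨s, p⟩ ⟨Qf, ⟨hχ, t, hθ, hmem⟩, hq⟩
    exact ⟨hχ hq, t, hθ hq, ih hnf ζ η h ⟨Qf ∩ χ ∩ F.theta s a t, hmem, ⟨hq, hχ hq⟩, hθ hq⟩⟩
  | box a χ φ ih =>
    intro hnf ζ η h
    rintro ⟨s, p⟩ ⟨Qf, hQf, hq⟩
    intro hpχ t hpt
    have hmem := hQf ⟨p, hq, hpχ⟩ t ⟨p, ⟨hq, hpχ⟩, hpt⟩
    exact ih hnf ζ η h ⟨Qf ∩ χ ∩ F.theta s a t, hmem, ⟨hq, hpχ⟩, hpt⟩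
  | var x =>
    intro _ ζ η h
    rintro ⟨s, p⟩ ⟨Qf, hQf, hq⟩
    exact h x ⟨Qf, hQf, hq⟩
  | mu x φ ih =>
    intro hnf ζ η h
    rintro ⟨s, p⟩ ⟨Qf, hQf, hq⟩
    simp only [MuLf.sem, slfp, Set.mem_sInter, Set.mem_setOf_eq]
    intro V hV
    set W : Set (S × Set P) := {sP | ∀ q ∈ sP.2, (sP.1, q) ∈ V} with hWdef
    have hfpW : fp W ⊆ V := by
      rintro ⟨r, pr⟩ ⟨Rf, hRf, hr⟩
      exact hRf pr hr
    have hfW : MuLf.fsem F φ (Function.update ζ x W) ⊆ W := by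
      rintro ⟨t, Rf⟩ hmem q hqR
      apply hV
      refine ih hnf _ _ ?_ ⟨Rf, hmem, hqR⟩
      intro y
      rcases eq_or_ne y x with rfl | hy
      · simpa [Function.update_self] using hfpW
      · simpa [Function.update_of_ne hy] using h y
    have hPfW : (s, Qf) ∈ W := by
      have := hQf
      simp only [MuLf.fsem, slfp, Set.mem_sInter, Set.mem_setOf_eq] at this
      exact this W hfW
    exact hPfW p hq
  | nu x φ ih =>
    intro hnf ζ η h
    rintro ⟨s, p⟩ ⟨Qf, hQf, hq⟩
    simp only [MuLf.fsem, sgfp, Set.mem_sUnion, Set.mem_setOf_eq] at hQf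
    obtain ⟨W, hWf, hsW⟩ := hQf
    refine Set.mem_sUnion.mpr ⟨fp W, ?_, ⟨Qf, hsW, hq⟩⟩
    simp only [Set.mem_setOf_eq]
    intro sp hsp
    refine ih hnf _ _ ?_ (fp_mono hWf hsp)
    intro y
    rcases eq_or_ne y x with rfl | hy
    · simp [Function.update_self]
    · simpa [Function.update_of_ne hy] using h y

/-- P ⊨'_F φ' implies p ⊨_F fm(φ') for every p ∈ P, for closed
negation-free φ' (fm is the identity on our shared syntax). -/
theorem stmt7 {S A X P : Type} [DecidableEq X] (F : FTS S A P)
    (phi : MuLf A X P) (hclosed : MuLf.closed phi) (hnf : MuLf.negFree phi)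
    (Pf : Set P) :
    (F.init, Pf) ∈ MuLf.fsem F phi (fun _ => (∅ : Set (S × Set P))) →
      ∀ p ∈ Pf, (F.init, p) ∈ MuLf.sem F phi (fun _ => (∅ : Set (S × P))) := by
  intro hmem p hp
  refine key_lemma F phi hnf _ _ ?_ ⟨Pf, hmem, hp⟩
  intro x
  rintro ⟨s, q⟩ ⟨Qf, hQf, _⟩
  exact absurd hQf (Set.notMem_empty _)

end SPLmu
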